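/- Let p be a prime and c a positive integer such that p divides c but p² does not divide c, and let m, n be integers. Let p* be an integer with p·p* ≡ 1 (mod c/p). Then S(m, p·n; c) = −S(p*·m, n; c/p) if p does not divide m, and S(m, p·n; c) = (p−1)·S(p*·m, n; c/p) if p divides m. -/

import Mathlib

/-- The Kloosterman sum `S(m,n;c) = ∑_{d ∈ (ℤ/cℤ)ˣ} e((d̄·m + d·n)/c)`,
where `e(x) = exp(2πi·x)`. -/
noncomputable def Kl (m n : ℤ) (c : ℕ) : ℂ :=
  if h : c = 0 then 0 else
  haveI : NeZero c := ⟨h⟩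
  ∑ d : (ZMod c)ˣ,
    Complex.exp (2 * Real.pi * Complex.I *
      (((((d⁻¹ : (ZMod c)ˣ) : ZMod c).val : ℂ) * (m : ℂ) +
        (((d : ZMod c).val : ℂ) * (n : ℂ))) / (c : ℂ)))

open Finset

/-- `EE N a = exp(2πi a / N)`. -/
noncomputable def EE (N : ℕ) (a : ℤ) : ℂ :=
  Complex.exp (2 * Real.pi * Complex.I * a / N)

lemma EE_add (N : ℕ) (a b : ℤ) : EE N (a + b) = EE N a * EE N b := by
  rw [EE, EE, EE, ← Complex.exp_add]
  congr 1
  push_cast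
  ring

lemma EE_zero (N : ℕ) : EE N 0 = 1 := by simp [EE]

lemma EE_nat_mul (N : ℕ) (hN : N ≠ 0) (k : ℤ) : EE N (N * k) = 1 := by
  rw [EE]
  have hN' : (N : ℂ) ≠ 0 := Nat.cast_ne_zero.2 hN
  have : 2 * (Real.pi : ℂ) * Complex.I * ((N : ℤ) * k : ℤ) / N
      = (k : ℂ) * (2 * Real.pi * Complex.I) := by
    push_cast
    field_simp
  rw [this, Complex.exp_int_mul_two_pi_mul_I]

lemma EE_congr {N : ℕ} (hN : N ≠ 0) {a b : ℤ} (h : (a : ZMod N) = (b : ZMod N)) :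
    EE N a = EE N b := by
  have hd : (N : ℤ) ∣ b - a := ((ZMod.intCast_eq_intCast_iff a b N).1 h).dvd
  obtain ⟨k, hk⟩ := hd
  have hb : b = a + N * k := by linarith
  rw [hb, EE_add, EE_nat_mul N hN, mul_one]

lemma EE_pow (N : ℕ) (a : ℤ) (i : ℕ) : EE N (a * i) = EE N a ^ i := by
  rw [EE, EE, ← Complex.exp_nat_mul]
  congr 1
  push_cast
  ring

lemma EE_split {p q : ℕ} (hp : p ≠ 0) (hq : q ≠ 0) {r s : ℤ}
    (hb : r * q + s * p = 1) (x : ℤ) :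
    EE (p * q) x = EE p (r * x) * EE q (s * x) := by
  rw [EE, EE, EE, ← Complex.exp_add]
  congr 1
  have h1 : (r : ℂ) * q + s * p = 1 := by exact_mod_cast hb
  have hp' : (p : ℂ) ≠ 0 := Nat.cast_ne_zero.2 hp
  have hq' : (q : ℂ) ≠ 0 := Nat.cast_ne_zero.2 hq
  push_cast
  field_simp
  linear_combination (-(x : ℂ)) * h1

/-- the full exponential sum over `ZMod p` vanishes when `p ∤ a`. -/
lemma sum_EE_full (p : ℕ) [NeZero p] (hp : p.Prime) (a : ℤ) (ha : ¬ (p : ℤ) ∣ a) :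
    ∑ t : ZMod p, EE p (a * (t.val : ℤ)) = 0 := by
  have hp' : (p : ℂ) ≠ 0 := Nat.cast_ne_zero.2 hp.ne_zero
  set ζ : ℂ := EE p a with hζ
  have hre : ∑ t : ZMod p, EE p (a * (t.val : ℤ)) = ∑ i ∈ Finset.range p, ζ ^ i := by
    rw [Finset.sum_congr rfl (fun t _ => EE_pow p a t.val)]
    refine Finset.sum_nbij' (fun t => t.val) (fun i => (i : ZMod p)) ?_ ?_ ?_ ?_ ?_
    · intro t _; exact Finset.mem_range.2 (ZMod.val_lt t)
    · intro i _; exact Finset.mem_univ _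
    · intro t _; exact ZMod.natCast_zmod_val t
    · intro i hi; exact ZMod.val_cast_of_lt (Finset.mem_range.1 hi)
    · intro t _; rfl
  rw [hre]
  have hζp : ζ ^ p = 1 := by
    rw [hζ, ← EE_pow]
    have h : a * (p : ℤ) = (p : ℤ) * a := by ring
    rw [h, EE_nat_mul p hp.ne_zero]
  have hζ1 : ζ ≠ 1 := by
    intro h
    rw [hζ, EE, Complex.exp_eq_one_iff] at h
    obtain ⟨k, hk⟩ := h
    have h2 : (2 * (Real.pi : ℂ) * Complex.I) * ((a : ℂ) / p) =
        (2 * (Real.pi : ℂ) * Complex.I) * (k : ℂ) := by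
      rw [← mul_div_assoc, hk]; ring
    have h3 : (a : ℂ) / p = (k : ℂ) := mul_left_cancel₀ Complex.two_pi_I_ne_zero h2
    have h4 : (a : ℂ) = (k : ℂ) * p := (div_eq_iff hp').1 h3
    have h5 : a = k * p := by exact_mod_cast h4
    exact ha ⟨k, by rw [h5, mul_comm]⟩
  rw [geom_sum_eq hζ1, hζp, sub_self, zero_div]

lemma sum_EE_units_not_dvd (p : ℕ) [NeZero p] (hp : p.Prime) (a : ℤ) (ha : ¬ (p : ℤ) ∣ a) :
    ∑ u : (ZMod p)ˣ, EE p (a * (((u : (ZMod p)ˣ) : ZMod p).val : ℤ)) = -1 := by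
  haveI : Fact p.Prime := ⟨hp⟩
  have key := sum_EE_full p hp a ha
  have hsplit : ∑ t : ZMod p, EE p (a * (t.val : ℤ))
      = ∑ t ∈ Finset.univ.erase (0 : ZMod p), EE p (a * (t.val : ℤ))
        + EE p (a * ((0 : ZMod p).val : ℤ)) :=
    (Finset.sum_erase_add _ _ (Finset.mem_univ (0 : ZMod p))).symm
  have h0 : EE p (a * ((0 : ZMod p).val : ℤ)) = 1 := by
    rw [ZMod.val_zero]
    simpa using EE_zero p
  have hunits : ∑ u : (ZMod p)ˣ, EE p (a * (((u : (ZMod p)ˣ) : ZMod p).val : ℤ))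
      = ∑ t ∈ Finset.univ.erase (0 : ZMod p), EE p (a * (t.val : ℤ)) := by
    have e1 : ∑ u : (ZMod p)ˣ, EE p (a * (((u : (ZMod p)ˣ) : ZMod p).val : ℤ))
        = ∑ x : {t : ZMod p // t ≠ 0}, EE p (a * (((x : ZMod p)).val : ℤ)) :=
      Fintype.sum_equiv unitsEquivNeZero _ _ (fun u => rfl)
    rw [e1]
    exact (Finset.sum_subtype (Finset.univ.erase (0 : ZMod p))
      (fun t => by simp) (fun t => EE p (a * (t.val : ℤ)))).symm
  rw [hunits]
  rw [hsplit, h0] at key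
  linear_combination key

lemma sum_EE_units_dvd (p : ℕ) [NeZero p] (hp : p.Prime) (a : ℤ) (ha : (p : ℤ) ∣ a) :
    ∑ u : (ZMod p)ˣ, EE p (a * (((u : (ZMod p)ˣ) : ZMod p).val : ℤ)) = (p : ℂ) - 1 := by
  obtain ⟨b, rfl⟩ := ha
  have hterm : ∀ u : (ZMod p)ˣ, EE p ((p : ℤ) * b * (((u : (ZMod p)ˣ) : ZMod p).val : ℤ)) = 1 := by
    intro u
    have h : (p : ℤ) * b * (((u : (ZMod p)ˣ) : ZMod p).val : ℤ)
        = (p : ℤ) * (b * (((u : (ZMod p)ˣ) : ZMod p).val : ℤ)) := by ring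
    rw [h, EE_nat_mul p hp.ne_zero]
  rw [Finset.sum_congr rfl (fun u _ => hterm u), Finset.sum_const, nsmul_eq_mul, mul_one]
  rw [Finset.card_univ, ZMod.card_units_eq_totient, Nat.totient_prime hp]
  push_cast [Nat.cast_sub hp.one_le]
  ring

lemma Kl_eq (m n : ℤ) (c : ℕ) (hc : c ≠ 0) :
    haveI : NeZero c := ⟨hc⟩
    Kl m n c = ∑ d : (ZMod c)ˣ,
      EE c ((((d⁻¹ : (ZMod c)ˣ) : ZMod c).val : ℤ) * m
        + (((d : (ZMod c)ˣ) : ZMod c).val : ℤ) * n) := by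
  simp only [Kl, dif_neg hc]
  refine Finset.sum_congr rfl fun d _ => ?_
  rw [EE]
  congr 1
  push_cast
  ring

lemma val_cast_unit {M N : ℕ} [NeZero M] (h : N ∣ M) (d : (ZMod M)ˣ) :
    (((d : ZMod M).val : ℕ) : ZMod N)
      = ((Units.map (ZMod.castHom h (ZMod N)).toMonoidHom d : (ZMod N)ˣ) : ZMod N) := by
  rw [ZMod.natCast_val, Units.coe_map]
  simp

lemma val_self (N : ℕ) [NeZero N] (u : (ZMod N)ˣ) :
    (((u : ZMod N).val : ℕ) : ZMod N) = (u : ZMod N) :=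
  ZMod.natCast_zmod_val _

theorem stmt_0 (p : ℕ) (hp : p.Prime) (c : ℕ) (hc : 0 < c)
    (hpc : p ∣ c) (hp2c : ¬ (p ^ 2 ∣ c)) (m n : ℤ) (pstar : ℤ)
    (hpstar : (p : ℤ) * pstar ≡ 1 [ZMOD ((c / p : ℕ) : ℤ)]) :
    (¬ (p : ℤ) ∣ m → Kl m ((p : ℤ) * n) c = - Kl (pstar * m) n (c / p)) ∧
    ((p : ℤ) ∣ m → Kl m ((p : ℤ) * n) c = ((p : ℂ) - 1) * Kl (pstar * m) n (c / p)) := by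
  obtain ⟨c', rfl⟩ := hpc
  have hp0 : p ≠ 0 := hp.ne_zero
  have hc'0 : c' ≠ 0 := by rintro rfl; simp at hc
  have hcp : (p * c') / p = c' := Nat.mul_div_cancel_left c' hp.pos
  rw [hcp] at hpstar ⊢
  have hpc' : ¬ p ∣ c' := by
    rintro ⟨t, rfl⟩
    exact hp2c ⟨t, by ring⟩
  have hcop : Nat.Coprime p c' := (hp.coprime_iff_not_dvd).2 hpc'
  haveI : NeZero p := ⟨hp0⟩
  haveI : NeZero c' := ⟨hc'0⟩
  have hpc0 : p * c' ≠ 0 := mul_ne_zero hp0 hc'0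
  haveI : NeZero (p * c') := ⟨hpc0⟩
  -- Bezout
  obtain ⟨r, s, hrs⟩ : ∃ r s : ℤ, r * (c' : ℤ) + s * (p : ℤ) = 1 := by
    have h := Int.gcd_eq_gcd_ab (c' : ℤ) (p : ℤ)
    have hg : Int.gcd (c' : ℤ) (p : ℤ) = 1 := by
      rw [Int.gcd_natCast_natCast]
      exact hcop.symm
    rw [hg] at h
    exact ⟨Int.gcdA c' p, Int.gcdB c' p, by push_cast at h; linear_combination -h⟩
  have hr : ¬ (p : ℤ) ∣ r := by
    intro hdvd
    have h1 : (p : ℤ) ∣ r * (c' : ℤ) := hdvd.mul_right _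
    have h2 : (p : ℤ) ∣ s * (p : ℤ) := dvd_mul_left _ _
    have h3 : (p : ℤ) ∣ 1 := by rw [← hrs]; exact dvd_add h1 h2
    exact (Nat.prime_iff_prime_int.mp hp).not_dvd_one h3
  -- congruences mod c'
  have hsp : (s : ZMod c') * (p : ZMod c') = 1 := by
    have h := congrArg (fun x : ℤ => (x : ZMod c')) hrs
    push_cast at h
    rw [ZMod.natCast_self, mul_zero, zero_add] at h
    exact h
  have hps : (p : ZMod c') * (pstar : ZMod c') = 1 := by
    have h := (ZMod.intCast_eq_intCast_iff _ _ _).2 hpstar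
    push_cast at h
    exact h
  have hpstar_s : (pstar : ZMod c') = (s : ZMod c') := by
    calc (pstar : ZMod c') = ((s : ZMod c') * (p : ZMod c')) * (pstar : ZMod c') := by
          rw [hsp, one_mul]
      _ = (s : ZMod c') * ((p : ZMod c') * (pstar : ZMod c')) := by ring
      _ = (s : ZMod c') := by rw [hps, mul_one]
  -- the two cast homs and the units map
  set φp : ZMod (p * c') →+* ZMod p := ZMod.castHom (dvd_mul_right p c') (ZMod p) with hφp
  set φq : ZMod (p * c') →+* ZMod c' := ZMod.castHom (dvd_mul_left c' p) (ZMod c') with hφq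
  set π : (ZMod (p * c'))ˣ → (ZMod p)ˣ × (ZMod c')ˣ :=
    fun d => (Units.map φp.toMonoidHom d, Units.map φq.toMonoidHom d) with hπ
  have hπinj : Function.Injective π := by
    intro d e h
    have h1 : φp (d : ZMod (p * c')) = φp (e : ZMod (p * c')) := by
      have := congrArg (fun w => ((w.1 : (ZMod p)ˣ) : ZMod p)) h
      simpa [hπ, Units.coe_map] using this
    have h2 : φq (d : ZMod (p * c')) = φq (e : ZMod (p * c')) := by
      have := congrArg (fun w => ((w.2 : (ZMod c')ˣ) : ZMod c')) h
      simpa [hπ, Units.coe_map] using this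
    have v1 : (((d : ZMod (p * c')).val : ℕ) : ZMod p) = (((e : ZMod (p * c')).val : ℕ) : ZMod p) := by
      rw [ZMod.natCast_val, ZMod.natCast_val]
      simpa [hφp] using h1
    have v2 : (((d : ZMod (p * c')).val : ℕ) : ZMod c') = (((e : ZMod (p * c')).val : ℕ) : ZMod c') := by
      rw [ZMod.natCast_val, ZMod.natCast_val]
      simpa [hφq] using h2
    have m1 : (d : ZMod (p * c')).val ≡ (e : ZMod (p * c')).val [MOD p] :=
      (ZMod.natCast_eq_natCast_iff _ _ _).1 v1
    have m2 : (d : ZMod (p * c')).val ≡ (e : ZMod (p * c')).val [MOD c'] :=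
      (ZMod.natCast_eq_natCast_iff _ _ _).1 v2
    have m3 : (d : ZMod (p * c')).val ≡ (e : ZMod (p * c')).val [MOD p * c'] :=
      (Nat.modEq_and_modEq_iff_modEq_mul hcop).1 ⟨m1, m2⟩
    have : (d : ZMod (p * c')) = (e : ZMod (p * c')) := by
      rw [← ZMod.natCast_zmod_val (d : ZMod (p * c')), ← ZMod.natCast_zmod_val (e : ZMod (p * c')),
        ZMod.natCast_eq_natCast_iff]
      exact m3
    exact Units.ext this
  have hπbij : Function.Bijective π := by
    rw [Fintype.bijective_iff_injective_and_card]
    refine ⟨hπinj, ?_⟩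
    rw [Fintype.card_prod, ZMod.card_units_eq_totient, ZMod.card_units_eq_totient,
      ZMod.card_units_eq_totient, Nat.totient_mul hcop]
  -- pointwise identity
  set F : (ZMod p)ˣ × (ZMod c')ˣ → ℂ := fun w =>
      EE p ((r * m) * ((((w.1⁻¹ : (ZMod p)ˣ) : ZMod p)).val : ℤ)) *
      EE c' (((((w.2⁻¹ : (ZMod c')ˣ) : ZMod c')).val : ℤ) * (pstar * m)
        + ((((w.2 : (ZMod c')ˣ)) : ZMod c').val : ℤ) * n) with hF
  have key : ∀ d : (ZMod (p * c'))ˣ,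
      EE (p * c') ((((d⁻¹ : (ZMod (p * c'))ˣ) : ZMod (p * c')).val : ℤ) * m
          + (((d : (ZMod (p * c'))ˣ) : ZMod (p * c')).val : ℤ) * ((p : ℤ) * n))
        = F (π d) := by
    intro d
    simp only [hπ, hF]
    rw [EE_split hp0 hc'0 hrs]
    have cast_p := val_cast_unit (dvd_mul_right p c') d
    have cast_p' := val_cast_unit (dvd_mul_right p c') d⁻¹
    rw [map_inv] at cast_p'
    have cast_q := val_cast_unit (dvd_mul_left c' p) d
    have cast_q' := val_cast_unit (dvd_mul_left c' p) d⁻¹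
    rw [map_inv] at cast_q'
    congr 1
    · apply EE_congr hp0
      push_cast
      rw [cast_p, cast_p', val_self, ZMod.natCast_self]
      ring
    · apply EE_congr hc'0
      push_cast
      rw [cast_q, cast_q', val_self, val_self, hpstar_s]
      linear_combination (((Units.map φq.toMonoidHom d : (ZMod c')ˣ) : ZMod c') * (n : ZMod c')) * hsp
  -- master identity
  have master : Kl m ((p : ℤ) * n) (p * c')
      = (∑ u : (ZMod p)ˣ, EE p ((r * m) * (((u : (ZMod p)ˣ) : ZMod p).val : ℤ)))
        * Kl (pstar * m) n c' := by
    rw [Kl_eq m ((p : ℤ) * n) (p * c') hpc0, Kl_eq (pstar * m) n c' hc'0,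
      Finset.sum_mul_sum]
    rw [Fintype.sum_bijective π hπbij _ F key]
    simp only [hF]
    rw [Fintype.sum_prod_type]
    have inv_reindex : ∀ u : (ZMod p)ˣ,
        (∑ v : (ZMod c')ˣ, EE p ((r * m) * ((((u⁻¹ : (ZMod p)ˣ) : ZMod p)).val : ℤ)) *
          EE c' (((((v⁻¹ : (ZMod c')ˣ) : ZMod c')).val : ℤ) * (pstar * m)
            + ((((v : (ZMod c')ˣ)) : ZMod c').val : ℤ) * n))
        = (fun u : (ZMod p)ˣ => ∑ v : (ZMod c')ˣ,
            EE p ((r * m) * ((((u : (ZMod p)ˣ) : ZMod p)).val : ℤ)) *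
            EE c' (((((v⁻¹ : (ZMod c')ˣ) : ZMod c')).val : ℤ) * (pstar * m)
              + ((((v : (ZMod c')ˣ)) : ZMod c').val : ℤ) * n)) u⁻¹ := fun u => rfl
    calc ∑ u : (ZMod p)ˣ, ∑ v : (ZMod c')ˣ,
          EE p ((r * m) * ((((u⁻¹ : (ZMod p)ˣ) : ZMod p)).val : ℤ)) *
          EE c' (((((v⁻¹ : (ZMod c')ˣ) : ZMod c')).val : ℤ) * (pstar * m)
            + ((((v : (ZMod c')ˣ)) : ZMod c').val : ℤ) * n)
        = ∑ u : (ZMod p)ˣ, ∑ v : (ZMod c')ˣ,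
          EE p ((r * m) * ((((u : (ZMod p)ˣ) : ZMod p)).val : ℤ)) *
          EE c' (((((v⁻¹ : (ZMod c')ˣ) : ZMod c')).val : ℤ) * (pstar * m)
            + ((((v : (ZMod c')ˣ)) : ZMod c').val : ℤ) * n) := by
          rw [Finset.sum_congr rfl (fun u _ => inv_reindex u)]
          exact Equiv.sum_comp (Equiv.inv (ZMod p)ˣ)
            (fun u : (ZMod p)ˣ => ∑ v : (ZMod c')ˣ,
              EE p ((r * m) * ((((u : (ZMod p)ˣ) : ZMod p)).val : ℤ)) *
              EE c' (((((v⁻¹ : (ZMod c')ˣ) : ZMod c')).val : ℤ) * (pstar * m)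
                + ((((v : (ZMod c')ˣ)) : ZMod c').val : ℤ) * n))
      _ = _ := rfl
  constructor
  · intro hm
    have hrm : ¬ (p : ℤ) ∣ r * m := by
      intro hd
      rcases (Nat.prime_iff_prime_int.mp hp).dvd_mul.1 hd with h | h
      · exact hr h
      · exact hm h
    rw [master, sum_EE_units_not_dvd p hp (r * m) hrm]
    ring
  · intro hm
    rw [master, sum_EE_units_dvd p hp (r * m) (Dvd.dvd.mul_left hm r)]
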